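/- Let λ ∈ P_3(n) be a 3-regular partition fixed by the Mullineux map, with Mullineux symbol columns (a_0,…,a_k; r_0,…,r_k) satisfying: (a_k, r_k) = (1,1), and for 0 ≤ j < k, if (a_{j+1}, r_{j+1}) = (6c+1, 3c+1) then (a_j, r_j) = (6(c+1)−1, 3(c+1)), and if (a_{j+1}, r_{j+1}) ∈ {(6c−1, 3c), (6c, 3c)} then (a_j, r_j) ∈ {(6c, 3c), (6c+1, 3c+1)}. If h(λ) = r_0 = 3c then n = a_0 + ⋯ + a_k ≥ 6c² = 2c·h(λ), and if h(λ) = 3c+1 then n ≥ 6c² + 6c + 1 ≥ 2c·h(λ). -/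

import Mathlib

/-- Arithmetic of the Mullineux symbol of a Mullineux-fixed 3-regular partition:
with `(a_k, r_k) = (1,1)` and the recursive constraints on consecutive columns,
if `h(λ) = r_0 = 3c` then `n = a_0 + ⋯ + a_k ≥ 6c² = 2c·h(λ)`, and if
`r_0 = 3c + 1` then `n ≥ 6c² + 6c + 1 ≥ 2c·h(λ)`. -/
theorem stmt_8 (k : ℕ) (a r : ℕ → ℕ)
    (hak : a k = 1) (hrk : r k = 1)
    (hstep1 : ∀ j < k, ∀ c : ℕ, a (j + 1) = 6 * c + 1 ∧ r (j + 1) = 3 * c + 1 →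
      a j = 6 * (c + 1) - 1 ∧ r j = 3 * (c + 1))
    (hstep2 : ∀ j < k, ∀ c : ℕ,
      ((a (j + 1) = 6 * c - 1 ∧ r (j + 1) = 3 * c) ∨ (a (j + 1) = 6 * c ∧ r (j + 1) = 3 * c)) →
      ((a j = 6 * c ∧ r j = 3 * c) ∨ (a j = 6 * c + 1 ∧ r j = 3 * c + 1)))
    (n : ℕ) (hn : n = ∑ j ∈ Finset.range (k + 1), a j) :
    (∀ c : ℕ, r 0 = 3 * c → 6 * c ^ 2 ≤ n ∧ 6 * c ^ 2 = 2 * c * r 0) ∧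
    (∀ c : ℕ, r 0 = 3 * c + 1 → (6 * c ^ 2 + 6 * c + 1 ≤ n ∧ 2 * c * r 0 ≤ 6 * c ^ 2 + 6 * c + 1)) := by
  set S : ℕ → ℕ := fun j => ∑ i ∈ Finset.Icc j k, a i with hS
  have hsplit : ∀ j, j ≤ k → S j = a j + S (j + 1) := by
    intro j hj
    have : Finset.Icc j k = insert j (Finset.Icc (j + 1) k) := by
      ext x; simp only [Finset.mem_Icc, Finset.mem_insert]; omega
    simp only [hS, this]
    rw [Finset.sum_insert (by simp)]
  have key : ∀ d j, j ≤ k → k - j = d →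
      (∃ c, a j = 6 * c + 1 ∧ r j = 3 * c + 1 ∧ 6 * c ^ 2 + 6 * c + 1 ≤ S j) ∨
      (∃ c, 1 ≤ c ∧ (a j = 6 * c - 1 ∨ a j = 6 * c) ∧ r j = 3 * c ∧ 6 * c ^ 2 ≤ S j) := by
    intro d
    induction d with
    | zero =>
      intro j hj hd
      have hjk : j = k := by omega
      subst hjk
      left
      exact ⟨0, by simpa using hak, by simpa using hrk, by
        simp only [hS]
        rw [Finset.Icc_self, Finset.sum_singleton, hak]; norm_num⟩
    | succ d ih =>
      intro j hj hd
      have hjk : j < k := by omega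
      have h1 : j + 1 ≤ k := hjk
      rcases ih (j + 1) h1 (by omega) with ⟨c, ha, hr, hs⟩ | ⟨c, hc1, ha, hr, hs⟩
      · -- state A_c at j+1, predecessor is B_{c+1}
        obtain ⟨haj, hrj⟩ := hstep1 j hjk c ⟨ha, hr⟩
        right
        refine ⟨c + 1, by omega, Or.inl haj, hrj, ?_⟩
        rw [hsplit j (le_of_lt hjk)]
        have : a j = 6 * c + 5 := by omega
        nlinarith
      · -- state B_c or C_c at j+1, predecessor is C_c or A_c
        have hyp : (a (j + 1) = 6 * c - 1 ∧ r (j + 1) = 3 * c) ∨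
            (a (j + 1) = 6 * c ∧ r (j + 1) = 3 * c) := by
          rcases ha with h | h
          · exact Or.inl ⟨h, hr⟩
          · exact Or.inr ⟨h, hr⟩
        rcases hstep2 j hjk c hyp with ⟨haj, hrj⟩ | ⟨haj, hrj⟩
        · right
          refine ⟨c, hc1, Or.inr haj, hrj, ?_⟩
          rw [hsplit j (le_of_lt hjk)]
          nlinarith
        · left
          refine ⟨c, haj, hrj, ?_⟩
          rw [hsplit j (le_of_lt hjk)]
          nlinarith
  have hnS : n = S 0 := by
    rw [hn, hS]
    congr 1
    ext x; simp [Finset.mem_Icc, Finset.mem_range]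
  rcases key (k - 0) 0 (Nat.zero_le k) rfl with ⟨c, ha, hr, hs⟩ | ⟨c, hc1, ha, hr, hs⟩
  · constructor
    · intro c' hc'; omega
    · intro c' hc'
      have : c' = c := by omega
      subst this
      constructor
      · omega
      · rw [hr]; nlinarith
  · constructor
    · intro c' hc'
      have : c' = c := by omega
      subst this
      refine ⟨by omega, by rw [hr]; ring⟩
    · intro c' hc'; omega
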